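/- arXiv:1207.2536 — 4 statements merged into one kernel-verified Lean document; each statement's English description precedes it below -/
import Mathlib

section
/- The equilibrium density μ is a probability density on [0,1]: ∫_0^1 μ(x) dx = 1, where μ(x) = (2/(πc)) arcsin(c/(2√(x−x²))) for x ∈ [a,b] and μ(x) = 1/c for x ∈ [0,a] ∪ [b,1]. -/
open Real

/-- The equilibrium density: `μ(x) = (2/(πc)) arcsin(c/(2√(x-x²)))` for `x ∈ [a,b]`,
and `μ(x) = 1/c` otherwise. -/
noncomputable def equilibriumDensity (c : ℝ) (x : ℝ) : ℝ :=
  if x ∈ Set.Icc (1 / 2 - Real.sqrt (1 - c ^ 2) / 2) (1 / 2 + Real.sqrt (1 - c ^ 2) / 2) then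
    (2 / (Real.pi * c)) * Real.arcsin (c / (2 * Real.sqrt (x - x ^ 2)))
  else 1 / c

set_option maxHeartbeats 1000000

lemma sqrt_one_sub_div_sq {A B C : ℝ} (hB : 0 < B) (hC : 0 ≤ C) (h : B^2 - A^2 = C^2) :
    Real.sqrt (1 - (A/B)^2) = C/B := by
  rw [show 1 - (A/B)^2 = (C/B)^2 by field_simp; linarith]
  exact Real.sqrt_sq (by positivity)

noncomputable def eqF (c x : ℝ) : ℝ :=
  (x - 1/2) * arcsin (c / (2 * Real.sqrt (x - x^2)))
  - (1/4) * arcsin ((x - c^2/2) / (Real.sqrt (1-c^2) * x))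
  + (1/4) * arcsin ((1 - x - c^2/2) / (Real.sqrt (1-c^2) * (1-x)))
  + (c/2) * arcsin ((2*x - 1) / Real.sqrt (1-c^2))

lemma eqF_deriv (c x : ℝ) (hc0 : 0 < c) (hc1 : c < 1)
    (hx : x ∈ Set.Ioo (1/2 - Real.sqrt (1-c^2)/2) (1/2 + Real.sqrt (1-c^2)/2)) :
    HasDerivAt (eqF c) (arcsin (c / (2 * Real.sqrt (x - x^2)))) x := by
  obtain ⟨hxa, hxb⟩ := hx
  set s := Real.sqrt (1 - c^2) with hsdef
  have hs2 : s^2 = 1 - c^2 := Real.sq_sqrt (by nlinarith)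
  have hs0 : 0 < s := Real.sqrt_pos.2 (by nlinarith)
  have hs1 : s < 1 := by nlinarith
  have hx0 : 0 < x := by nlinarith
  have hx1 : x < 1 := by nlinarith
  have hxx : 0 < x - x^2 := by nlinarith
  set q := Real.sqrt (x - x^2) with hqdef
  have hq2 : q^2 = x - x^2 := Real.sq_sqrt hxx.le
  have hq0 : 0 < q := Real.sqrt_pos.2 hxx
  have hrpos : 0 < 4*(x - x^2) - c^2 := by nlinarith
  set r := Real.sqrt (4*(x - x^2) - c^2) with hrdef
  have hr2 : r^2 = 4*(x - x^2) - c^2 := Real.sq_sqrt hrpos.le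
  have hr0 : 0 < r := Real.sqrt_pos.2 hrpos
  have h1x : 0 < 1 - x := by linarith
  -- bounds for arcsin args
  have hu1 : c / (2*q) < 1 := by rw [div_lt_one (by positivity)]; nlinarith
  have hu0 : 0 < c / (2*q) := by positivity
  have hv1abs : |(x - c^2/2) / (s*x)| < 1 := by
    rw [abs_div, abs_of_pos (by positivity : (0:ℝ) < s*x), div_lt_one (by positivity), abs_lt]
    constructor <;> nlinarith
  have hv2abs : |(1 - x - c^2/2) / (s*(1-x))| < 1 := by
    rw [abs_div, abs_of_pos (mul_pos hs0 h1x), div_lt_one (mul_pos hs0 h1x), abs_lt]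
    constructor <;> nlinarith
  have hv3abs : |(2*x - 1) / s| < 1 := by
    rw [abs_div, abs_of_pos hs0, div_lt_one hs0, abs_lt]; constructor <;> nlinarith
  -- inner derivatives
  have h_inner : HasDerivAt (fun y : ℝ => y - y^2) (1 - 2*x) x := by
    exact ((hasDerivAt_id' x).sub (hasDerivAt_pow 2 x)).congr_deriv (by norm_num)
  have hq' : HasDerivAt (fun y : ℝ => Real.sqrt (y - y^2)) ((1 - 2*x)/(2*q)) x :=
    h_inner.sqrt hxx.ne'
  have hden : HasDerivAt (fun y : ℝ => 2 * Real.sqrt (y - y^2)) (2*((1 - 2*x)/(2*q))) x :=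
    hq'.const_mul 2
  have hu : HasDerivAt (fun y : ℝ => c / (2 * Real.sqrt (y - y^2)))
      ((0 * (2*q) - c * (2*((1 - 2*x)/(2*q)))) / (2*q)^2) x :=
    (hasDerivAt_const x c).div hden (by positivity)
  have harcu : HasDerivAt (fun y : ℝ => arcsin (c / (2 * Real.sqrt (y - y^2))))
      (1 / Real.sqrt (1 - (c/(2*q))^2) * ((0 * (2*q) - c * (2*((1 - 2*x)/(2*q)))) / (2*q)^2)) x :=
    HasDerivAt.comp (h₂ := arcsin) x (Real.hasDerivAt_arcsin (by nlinarith [hu0]) hu1.ne) hu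
  have hterm1 : HasDerivAt (fun y : ℝ => (y - 1/2) * arcsin (c / (2 * Real.sqrt (y - y^2))))
      (1 * arcsin (c/(2*q)) + (x - 1/2) *
        (1 / Real.sqrt (1 - (c/(2*q))^2) * ((0 * (2*q) - c * (2*((1 - 2*x)/(2*q)))) / (2*q)^2))) x :=
    ((hasDerivAt_id x).sub_const (1/2)).mul harcu
  -- v1
  have hdenv1 : HasDerivAt (fun y : ℝ => s*y) s x := by
    simpa using (hasDerivAt_id x).const_mul s
  have hv1 : HasDerivAt (fun y : ℝ => (y - c^2/2) / (s*y))
      ((1 * (s*x) - (x - c^2/2) * s) / (s*x)^2) x :=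
    ((hasDerivAt_id x).sub_const (c^2/2)).div hdenv1 (by positivity)
  have harcv1 : HasDerivAt (fun y : ℝ => arcsin ((y - c^2/2) / (s*y)))
      (1 / Real.sqrt (1 - ((x - c^2/2)/(s*x))^2) * ((1 * (s*x) - (x - c^2/2) * s) / (s*x)^2)) x :=
    HasDerivAt.comp (h₂ := arcsin) x (Real.hasDerivAt_arcsin (abs_lt.1 hv1abs).1.ne' (abs_lt.1 hv1abs).2.ne) hv1
  -- v2
  have hnum2 : HasDerivAt (fun y : ℝ => 1 - y - c^2/2) (-1) x := by
    simpa using ((hasDerivAt_const x (1:ℝ)).sub (hasDerivAt_id x)).sub_const (c^2/2)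
  have hdenv2 : HasDerivAt (fun y : ℝ => s*(1-y)) (s * -1) x := by
    simpa using ((hasDerivAt_const x (1:ℝ)).sub (hasDerivAt_id x)).const_mul s
  have hv2 : HasDerivAt (fun y : ℝ => (1 - y - c^2/2) / (s*(1-y)))
      ((-1 * (s*(1-x)) - (1 - x - c^2/2) * (s * -1)) / (s*(1-x))^2) x :=
    hnum2.div hdenv2 (ne_of_gt (mul_pos hs0 h1x))
  have harcv2 : HasDerivAt (fun y : ℝ => arcsin ((1 - y - c^2/2) / (s*(1-y))))
      (1 / Real.sqrt (1 - ((1 - x - c^2/2)/(s*(1-x)))^2) *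
        ((-1 * (s*(1-x)) - (1 - x - c^2/2) * (s * -1)) / (s*(1-x))^2)) x :=
    HasDerivAt.comp (h₂ := arcsin) x (Real.hasDerivAt_arcsin (abs_lt.1 hv2abs).1.ne' (abs_lt.1 hv2abs).2.ne) hv2
  -- v3
  have hv3 : HasDerivAt (fun y : ℝ => (2*y - 1)/s) (2/s) x := by
    have h : HasDerivAt (fun y : ℝ => 2*y - 1) 2 x := by
      simpa using ((hasDerivAt_id x).const_mul 2).sub_const 1
    simpa using h.div_const s
  have harcv3 : HasDerivAt (fun y : ℝ => arcsin ((2*y - 1)/s))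
      (1 / Real.sqrt (1 - ((2*x-1)/s)^2) * (2/s)) x :=
    HasDerivAt.comp (h₂ := arcsin) x (Real.hasDerivAt_arcsin (abs_lt.1 hv3abs).1.ne' (abs_lt.1 hv3abs).2.ne) hv3
  -- assemble
  have hF := ((hterm1.sub (harcv1.const_mul (1/4))).add (harcv2.const_mul (1/4))).add
      (harcv3.const_mul (c/2))
  have E1 : Real.sqrt (1 - (c/(2*q))^2) = r/(2*q) :=
    sqrt_one_sub_div_sq (by positivity) hr0.le (by linear_combination 4*hq2 - hr2)
  have E2 : Real.sqrt (1 - ((x - c^2/2)/(s*x))^2) = (c*r/2)/(s*x) :=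
    sqrt_one_sub_div_sq (by positivity) (by positivity)
      (by linear_combination x^2*hs2 - (c^2/4)*hr2)
  have E3 : Real.sqrt (1 - ((1 - x - c^2/2)/(s*(1-x)))^2) = (c*r/2)/(s*(1-x)) :=
    sqrt_one_sub_div_sq (mul_pos hs0 h1x) (by positivity)
      (by linear_combination (1-x)^2*hs2 - (c^2/4)*hr2)
  have E4 : Real.sqrt (1 - ((2*x-1)/s)^2) = r/s :=
    sqrt_one_sub_div_sq hs0 hr0.le (by linear_combination hs2 - hr2)
  rw [E1, E2, E3, E4] at hF
  show HasDerivAt (fun y => (y - 1/2) * arcsin (c / (2 * Real.sqrt (y - y^2)))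
      - (1/4) * arcsin ((y - c^2/2) / (s*y))
      + (1/4) * arcsin ((1 - y - c^2/2) / (s*(1-y)))
      + (c/2) * arcsin ((2*y - 1)/s)) (arcsin (c/(2*q))) x
  convert hF using 1
  · rfl
  · rfl
  · rfl
  rw [one_mul]
  have hsne := hs0.ne'
  have hqne := hq0.ne'
  have hrne := hr0.ne'
  have hxne := hx0.ne'
  have h1xne := h1x.ne'
  have hcne := hc0.ne'
  field_simp
  linear_combination (4*c^2*(1-2*x)^2) * hq2



/-- The equilibrium density is a probability density on `[0,1]`: `∫₀¹ μ(x) dx = 1`. -/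
theorem stmt5 (c : ℝ) (hc : c ∈ Set.Ioo (0 : ℝ) 1) :
    ∫ x in (0 : ℝ)..1, equilibriumDensity c x = 1 := by
  obtain ⟨hc0, hc1⟩ := hc
  have hπ : Real.pi ≠ 0 := Real.pi_ne_zero
  set s := Real.sqrt (1 - c^2) with hsdef
  have hs2 : s^2 = 1 - c^2 := Real.sq_sqrt (by nlinarith)
  have hs0 : 0 < s := Real.sqrt_pos.2 (by nlinarith)
  have hs1 : s < 1 := by nlinarith
  set A := 1/2 - s/2 with hAdef
  set B := 1/2 + s/2 with hBdef
  have hA0 : 0 < A := by rw [hAdef]; linarith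
  have hB1 : B < 1 := by rw [hBdef]; linarith
  have hAB : A < B := by rw [hAdef, hBdef]; linarith
  have hA1 : A < 1 := by linarith
  have hB0 : 0 < B := by linarith
  -- sqrt at endpoints
  have hsqA : Real.sqrt (A - A^2) = c/2 := by
    rw [show A - A^2 = (c/2)^2 by rw [hAdef]; linear_combination (-(1/4))*hs2]
    exact Real.sqrt_sq (by positivity)
  have hsqB : Real.sqrt (B - B^2) = c/2 := by
    rw [show B - B^2 = (c/2)^2 by rw [hBdef]; linear_combination (-(1/4))*hs2]
    exact Real.sqrt_sq (by positivity)
  have harg : c / (2 * (c/2)) = 1 := by field_simp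
  -- values on the flat parts
  have hval : ∀ x, x = A ∨ x = B → equilibriumDensity c x = 1/c := by
    rintro x (rfl | rfl) <;>
      · simp only [equilibriumDensity]
        rw [if_pos (by constructor <;> simp [hAdef, hBdef] <;> linarith)]
        first
        | rw [hsqA, harg, Real.arcsin_one]
        | rw [hsqB, harg, Real.arcsin_one]
        field_simp
  have hleft : ∀ x ∈ Set.Icc (0:ℝ) A, equilibriumDensity c x = 1/c := by
    intro x hx
    rcases eq_or_lt_of_le hx.2 with h | h
    · exact hval x (Or.inl h)
    · simp only [equilibriumDensity]
      rw [if_neg]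
      intro hmem
      exact absurd hmem.1 (not_le.2 h)
  have hright : ∀ x ∈ Set.Icc B (1:ℝ), equilibriumDensity c x = 1/c := by
    intro x hx
    rcases eq_or_lt_of_le hx.1 with h | h
    · exact hval x (Or.inr h.symm)
    · simp only [equilibriumDensity]
      rw [if_neg]
      intro hmem
      exact absurd hmem.2 (not_le.2 h)
  have hmid : ∀ x ∈ Set.Icc A B, equilibriumDensity c x
      = (2/(Real.pi*c)) * arcsin (c / (2 * Real.sqrt (x - x^2))) := by
    intro x hx
    simp only [equilibriumDensity]
    rw [if_pos hx]
  -- continuity of the middle integrand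
  have hIccsub : Set.Icc A B ⊆ Set.Ioo (0:ℝ) 1 := fun x hx => ⟨lt_of_lt_of_le hA0 hx.1, lt_of_le_of_lt hx.2 hB1⟩
  have hsqrt_ne : ∀ x ∈ Set.Icc A B, 2 * Real.sqrt (x - x^2) ≠ 0 := by
    intro x hx
    obtain ⟨h0, h1⟩ := hIccsub hx
    have : 0 < x - x^2 := by nlinarith
    positivity
  have hcont_inner : ContinuousOn (fun x : ℝ => c / (2 * Real.sqrt (x - x^2))) (Set.Icc A B) := by
    apply ContinuousOn.div continuousOn_const
    · exact (continuous_const.mul (Real.continuous_sqrt.comp (continuous_id.sub (continuous_pow 2)))).continuousOn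
    · exact hsqrt_ne
  have hcont_arcsin : ContinuousOn (fun x : ℝ => arcsin (c / (2 * Real.sqrt (x - x^2)))) (Set.Icc A B) :=
    Real.continuous_arcsin.comp_continuousOn hcont_inner
  have hcont_g : ContinuousOn (fun x : ℝ => (2/(Real.pi*c)) * arcsin (c / (2 * Real.sqrt (x - x^2)))) (Set.Icc A B) :=
    continuousOn_const.mul hcont_arcsin
  -- integrability of the three pieces
  have int_left : IntervalIntegrable (equilibriumDensity c) MeasureTheory.volume 0 A := by
    apply (intervalIntegrable_const (c := 1/c)).congr
    intro x hx
    exact (hleft x (Set.uIoc_subset_uIcc.trans (Set.uIcc_of_le hA0.le).subset hx)).symm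
  have int_right : IntervalIntegrable (equilibriumDensity c) MeasureTheory.volume B 1 := by
    apply (intervalIntegrable_const (c := 1/c)).congr
    intro x hx
    exact (hright x (Set.uIoc_subset_uIcc.trans (Set.uIcc_of_le hB1.le).subset hx)).symm
  have int_mid : IntervalIntegrable (equilibriumDensity c) MeasureTheory.volume A B := by
    apply (hcont_g.intervalIntegrable_of_Icc hAB.le).congr
    intro x hx
    exact (hmid x (Set.uIoc_subset_uIcc.trans (Set.uIcc_of_le hAB.le).subset hx)).symm
  -- split the integral
  rw [← intervalIntegral.integral_add_adjacent_intervals int_left (int_mid.trans int_right),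
      ← intervalIntegral.integral_add_adjacent_intervals int_mid int_right]
  -- left and right values
  have vleft : ∫ x in (0:ℝ)..A, equilibriumDensity c x = A * (1/c) := by
    rw [intervalIntegral.integral_congr (g := fun _ => 1/c)
      (fun x hx => hleft x ((Set.uIcc_of_le hA0.le).subset hx))]
    simp [smul_eq_mul]
  have vright : ∫ x in B..(1:ℝ), equilibriumDensity c x = (1 - B) * (1/c) := by
    rw [intervalIntegral.integral_congr (g := fun _ => 1/c)
      (fun x hx => hright x ((Set.uIcc_of_le hB1.le).subset hx))]
    simp [smul_eq_mul]
  -- middle value via FTC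
  have hcont_F : ContinuousOn (eqF c) (Set.Icc A B) := by
    apply ContinuousOn.add
    apply ContinuousOn.add
    apply ContinuousOn.sub
    · exact (continuousOn_id.sub continuousOn_const).mul hcont_arcsin
    · apply continuousOn_const.mul
      apply Real.continuous_arcsin.comp_continuousOn
      apply ContinuousOn.div
      · exact (by fun_prop : Continuous (fun x : ℝ => x - c^2/2)).continuousOn
      · exact (continuous_const.mul continuous_id).continuousOn
      · intro x hx
        have := (hIccsub hx).1
        positivity
    · apply continuousOn_const.mul
      apply Real.continuous_arcsin.comp_continuousOn
      apply ContinuousOn.div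
      · exact (by fun_prop : Continuous (fun x : ℝ => 1 - x - c^2/2)).continuousOn
      · exact (continuous_const.mul (continuous_const.sub continuous_id)).continuousOn
      · intro x hx
        have h1 := (hIccsub hx).2
        have : (0:ℝ) < 1 - x := by linarith
        positivity
    · exact continuousOn_const.mul
        ((Real.continuous_arcsin.comp (((continuous_const.mul continuous_id).sub continuous_const).div_const s)).continuousOn)
  have int_arcsin : IntervalIntegrable (fun x : ℝ => arcsin (c / (2 * Real.sqrt (x - x^2))))
      MeasureTheory.volume A B := by
    apply ContinuousOn.intervalIntegrable
    rwa [Set.uIcc_of_le hAB.le]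
  have ftc : ∫ x in A..B, arcsin (c / (2 * Real.sqrt (x - x^2))) = eqF c B - eqF c A := by
    apply intervalIntegral.integral_eq_sub_of_hasDeriv_right_of_le hAB.le hcont_F
    · intro x hx
      exact (eqF_deriv c x hc0 hc1 hx).hasDerivWithinAt
    · exact int_arcsin
  have vmid : ∫ x in A..B, equilibriumDensity c x = (2/(Real.pi*c)) * (eqF c B - eqF c A) := by
    rw [intervalIntegral.integral_congr
      (g := fun x => (2/(Real.pi*c)) * arcsin (c / (2 * Real.sqrt (x - x^2))))
      (fun x hx => hmid x ((Set.uIcc_of_le hAB.le).subset hx))]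
    rw [intervalIntegral.integral_const_mul, ftc]
  -- endpoint values of eqF
  have h1B : 1 - B = A := by rw [hAdef, hBdef]; ring
  have h1A : 1 - A = B := by rw [hAdef, hBdef]; ring
  have hargB1 : (B - c^2/2) / (s*B) = 1 := by
    rw [show B - c^2/2 = s*B by rw [hBdef]; linear_combination (-(1/2))*hs2]
    exact div_self (by positivity)
  have hargA1 : (A - c^2/2) / (s*A) = -1 := by
    rw [show A - c^2/2 = -(s*A) by rw [hAdef]; linear_combination (-(1/2))*hs2]
    rw [neg_div, div_self (by positivity)]
  have hargB2 : (1 - B - c^2/2) / (s*(1-B)) = -1 := by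
    rw [show (1:ℝ) - B - c^2/2 = (1-B) - c^2/2 by ring, h1B]
    exact hargA1
  have hargA2 : (1 - A - c^2/2) / (s*(1-A)) = 1 := by
    rw [show (1:ℝ) - A - c^2/2 = (1-A) - c^2/2 by ring, h1A]
    exact hargB1
  have hargB3 : (2*B - 1)/s = 1 := by
    rw [hBdef, show 2*(1/2 + s/2) - 1 = s by ring, div_self hs0.ne']
  have hargA3 : (2*A - 1)/s = -1 := by
    rw [hAdef, show 2*(1/2 - s/2) - 1 = -s by ring, neg_div, div_self hs0.ne']
  have hFB : eqF c B = Real.pi*s/4 - Real.pi/4 + Real.pi*c/4 := by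
    simp only [eqF]
    rw [← hsdef, hsqB, harg, hargB1, hargB2, hargB3, Real.arcsin_one, Real.arcsin_neg_one]
    rw [hBdef]; ring
  have hFA : eqF c A = -(Real.pi*s/4) + Real.pi/4 - Real.pi*c/4 := by
    simp only [eqF]
    rw [← hsdef, hsqA, harg, hargA1, hargA2, hargA3, Real.arcsin_one, Real.arcsin_neg_one]
    rw [hAdef]; ring
  rw [vleft, vmid, vright, hFB, hFA, hAdef, hBdef]
  field_simp
  ring
end

section
/- For every x ∈ (b,1), the function φ*(x) = −∫_b^x [ (2/c) log( (s + √((s−a)(s−b)) + c/2)/(1 − s − √((s−a)(s−b)) + c/2) ) + (1/c) log((1−s)/s) ] ds is strictly negative. -/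
open Real

private lemma quad8 (c a b s : ℝ) (hc0 : 0 < c) (hc1 : c < 1)
    (ha : a = 1 / 2 - Real.sqrt (1 - c ^ 2) / 2)
    (hb : b = 1 / 2 + Real.sqrt (1 - c ^ 2) / 2) (hbs : b ≤ s) :
    Real.sqrt ((s - a) * (s - b)) ^ 2 = s ^ 2 - s + c ^ 2 / 4 := by
  have h1 : (0:ℝ) ≤ 1 - c ^ 2 := by nlinarith
  have hsq : Real.sqrt (1 - c ^ 2) ^ 2 = 1 - c ^ 2 := Real.sq_sqrt h1
  have hnn : 0 ≤ Real.sqrt (1 - c ^ 2) := Real.sqrt_nonneg _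
  have hab : a ≤ b := by rw [ha, hb]; linarith
  have hnonneg : 0 ≤ (s - a) * (s - b) :=
    mul_nonneg (by linarith) (by linarith)
  rw [Real.sq_sqrt hnonneg, ha, hb]
  linear_combination (-(1:ℝ)/4) * hsq

private lemma Dpos8 (c a b s : ℝ) (hc0 : 0 < c) (hc1 : c < 1)
    (ha : a = 1 / 2 - Real.sqrt (1 - c ^ 2) / 2)
    (hb : b = 1 / 2 + Real.sqrt (1 - c ^ 2) / 2) (hbs : b ≤ s) (hs1 : s < 1) :
    0 < 1 - s - Real.sqrt ((s - a) * (s - b)) + c / 2 := by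
  set r := Real.sqrt ((s - a) * (s - b)) with hr
  have hr2 : r ^ 2 = s ^ 2 - s + c ^ 2 / 4 := quad8 c a b s hc0 hc1 ha hb hbs
  have hr0 : 0 ≤ r := Real.sqrt_nonneg _
  nlinarith [hr2, hr0, mul_pos (show (0:ℝ) < 1 - s by linarith) hc0]

private lemma halfb8 (c b : ℝ) (hc0 : 0 < c) (hc1 : c < 1)
    (hb : b = 1 / 2 + Real.sqrt (1 - c ^ 2) / 2) : 1/2 < b ∧ b < 1 := by
  have h1 : (0:ℝ) < 1 - c ^ 2 := by nlinarith
  have hpos : 0 < Real.sqrt (1 - c ^ 2) := Real.sqrt_pos.mpr h1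
  have hlt : Real.sqrt (1 - c ^ 2) < 1 := by
    nlinarith [Real.sq_sqrt h1.le, hpos]
  constructor <;> [skip; skip] <;> rw [hb] <;> linarith

private lemma ipos8 (c a b s : ℝ) (hc0 : 0 < c) (hc1 : c < 1)
    (ha : a = 1 / 2 - Real.sqrt (1 - c ^ 2) / 2)
    (hb : b = 1 / 2 + Real.sqrt (1 - c ^ 2) / 2) (hbs : b < s) (hs1 : s < 1) :
    0 < (2 / c) * Real.log ((s + Real.sqrt ((s - a) * (s - b)) + c / 2) /
          (1 - s - Real.sqrt ((s - a) * (s - b)) + c / 2)) +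
        (1 / c) * Real.log ((1 - s) / s) := by
  obtain ⟨hb2, hb1⟩ := halfb8 c b hc0 hc1 hb
  set r := Real.sqrt ((s - a) * (s - b)) with hrdef
  have hr2 : r ^ 2 = s ^ 2 - s + c ^ 2 / 4 := quad8 c a b s hc0 hc1 ha hb hbs.le
  have hab : a < b := by
    rw [ha, hb]; have := Real.sqrt_pos.mpr (show (0:ℝ) < 1 - c^2 by nlinarith); linarith
  have hrpos : 0 < r := Real.sqrt_pos.mpr (mul_pos (by linarith) (by linarith))
  set N := s + r + c / 2 with hN
  set D := 1 - s - r + c / 2 with hD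
  have hDpos : 0 < D := Dpos8 c a b s hc0 hc1 ha hb hbs.le hs1
  have hNpos : 0 < N := by rw [hN]; linarith
  have hspos : 0 < s := by linarith
  have hs1' : 0 < 1 - s := by linarith
  have huv : (4*s*(1-s)+c - 2*r*(2*s-1)) * (4*s*(1-s)+c + 2*r*(2*s-1))
      = 4*s*(1-s)*(1+c)^2 := by linear_combination (-(4:ℝ))*(2*s-1)^2 * hr2
  have hvpos : 0 < 4*s*(1-s)+c + 2*r*(2*s-1) := by nlinarith
  have hu : 0 < 4*s*(1-s)+c - 2*r*(2*s-1) := by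
    nlinarith [huv, mul_pos (mul_pos (mul_pos (show (0:ℝ)<4 by norm_num) hspos) hs1') (show (0:ℝ) < (1+c)^2 by positivity)]
  have hdiff : N^2*(1-s) - D^2*s = r * (4*s*(1-s)+c - 2*r*(2*s-1)) := by
    rw [hN, hD]; linear_combination (2*s-1) * hr2
  have hkey : D^2 * s < N^2 * (1-s) := by nlinarith [mul_pos hrpos hu]
  have hfrac : 1 < (N/D)^2 * ((1-s)/s) := by
    rw [div_pow, div_mul_div_comm, lt_div_iff₀ (by positivity)]
    linarith
  have hlogeq : (2 / c) * Real.log (N / D) + (1 / c) * Real.log ((1 - s) / s)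
      = (1 / c) * Real.log ((N/D)^2 * ((1-s)/s)) := by
    rw [Real.log_mul (by positivity) (by positivity), Real.log_pow]
    push_cast
    ring
  rw [hlogeq]
  exact mul_pos (by positivity) (Real.log_pos hfrac)


/-- For every `x ∈ (b,1)`,
`φ*(x) = -∫_b^x [(2/c) log((s + √((s-a)(s-b)) + c/2)/(1 - s - √((s-a)(s-b)) + c/2))
                 + (1/c) log((1-s)/s)] ds < 0`. -/
theorem stmt8 (c a b : ℝ) (hc : c ∈ Set.Ioo (0 : ℝ) 1)
    (ha : a = 1 / 2 - Real.sqrt (1 - c ^ 2) / 2)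
    (hb : b = 1 / 2 + Real.sqrt (1 - c ^ 2) / 2) :
    ∀ x ∈ Set.Ioo b 1,
      -(∫ s in b..x,
          ((2 / c) * Real.log ((s + Real.sqrt ((s - a) * (s - b)) + c / 2) /
              (1 - s - Real.sqrt ((s - a) * (s - b)) + c / 2)) +
            (1 / c) * Real.log ((1 - s) / s))) < 0 := by
  obtain ⟨hc0, hc1⟩ := hc
  rintro x ⟨hbx, hx1⟩
  obtain ⟨hb2, hb1⟩ := halfb8 c b hc0 hc1 hb
  rw [neg_lt_zero]
  have hIcc : Set.uIcc b x = Set.Icc b x := Set.uIcc_of_le hbx.le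
  have hcont : ContinuousOn (fun s =>
      (2 / c) * Real.log ((s + Real.sqrt ((s - a) * (s - b)) + c / 2) /
          (1 - s - Real.sqrt ((s - a) * (s - b)) + c / 2)) +
        (1 / c) * Real.log ((1 - s) / s)) (Set.uIcc b x) := by
    rw [hIcc]
    have hcN : ContinuousOn (fun s : ℝ => s + Real.sqrt ((s - a) * (s - b)) + c / 2) (Set.Icc b x) := by
      fun_prop
    have hcD : ContinuousOn (fun s : ℝ => 1 - s - Real.sqrt ((s - a) * (s - b)) + c / 2) (Set.Icc b x) := by
      fun_prop
    apply ContinuousOn.add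
    · apply ContinuousOn.mul continuousOn_const
      apply ContinuousOn.log
      · apply hcN.div hcD
        intro s hs
        exact (Dpos8 c a b s hc0 hc1 ha hb hs.1 (lt_of_le_of_lt hs.2 hx1)).ne'
      · intro s hs
        have hD := Dpos8 c a b s hc0 hc1 ha hb hs.1 (lt_of_le_of_lt hs.2 hx1)
        have hN : 0 < s + Real.sqrt ((s - a) * (s - b)) + c / 2 := by
          have := Real.sqrt_nonneg ((s - a) * (s - b))
          have := hs.1
          nlinarith
        positivity
    · apply ContinuousOn.mul continuousOn_const
      apply ContinuousOn.log
      · apply ContinuousOn.div (by fun_prop) (by fun_prop)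
        intro s hs
        have h2 : (0:ℝ) < s := lt_of_lt_of_le (by linarith) hs.1
        exact h2.ne'
      intro s hs
      have h1 : 0 < 1 - s := by have := hs.2; linarith
      have h2 : 0 < s := by have := hs.1; linarith
      positivity
  apply intervalIntegral.intervalIntegral_pos_of_pos_on
    (hcont.intervalIntegrable)
  · intro s hs
    exact ipos8 c a b s hc0 hc1 ha hb hs.1 (lt_trans hs.2 hx1)
  · exact hbx
end

section
/- For x ∈ (b,1), the integrand F(x) := (2/c) log( (x + √((x−a)(x−b)) + c/2)/(1 − x − √((x−a)(x−b)) + c/2) ) + (1/c) log((1−x)/x) is strictly positive; equivalently, ((x + √((x−a)(x−b)) + c/2)/(1 − x − √((x−a)(x−b)) + c/2))² · (1−x)/x > 1. -/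
set_option maxHeartbeats 1600000 in
/-- For `x ∈ (b,1)` the integrand
`F(x) = (2/c) log((x + √((x-a)(x-b)) + c/2)/(1 - x - √((x-a)(x-b)) + c/2))
        + (1/c) log((1-x)/x)` is strictly positive; equivalently
`((x + √((x-a)(x-b)) + c/2)/(1 - x - √((x-a)(x-b)) + c/2))² (1-x)/x > 1`. -/
theorem stmt9 (c a b : ℝ) (hc : c ∈ Set.Ioo (0 : ℝ) 1)
    (ha : a = 1 / 2 - Real.sqrt (1 - c ^ 2) / 2)
    (hb : b = 1 / 2 + Real.sqrt (1 - c ^ 2) / 2) :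
    ∀ x ∈ Set.Ioo b 1,
      0 < (2 / c) * Real.log ((x + Real.sqrt ((x - a) * (x - b)) + c / 2) /
            (1 - x - Real.sqrt ((x - a) * (x - b)) + c / 2)) +
          (1 / c) * Real.log ((1 - x) / x) ∧
      1 < ((x + Real.sqrt ((x - a) * (x - b)) + c / 2) /
            (1 - x - Real.sqrt ((x - a) * (x - b)) + c / 2)) ^ 2 * ((1 - x) / x) := by
  obtain ⟨hc0, hc1⟩ := hc
  have h1c : (0:ℝ) ≤ 1 - c ^ 2 := by nlinarith
  have hr : Real.sqrt (1 - c ^ 2) ^ 2 = 1 - c ^ 2 := Real.sq_sqrt h1c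
  have hrnn : 0 ≤ Real.sqrt (1 - c ^ 2) := Real.sqrt_nonneg _
  rintro x ⟨hxb, hx1⟩
  set s := Real.sqrt ((x - a) * (x - b)) with hs
  have hxb' : 0 < x - b := by linarith
  have hxa : 0 < x - a := by simp only [ha, hb] at *; linarith
  have hx0 : 0 < x := by
    have : (0:ℝ) ≤ b := by rw [hb]; linarith
    linarith
  have hx1' : 0 < 1 - x := by linarith
  have hsq : s ^ 2 = (x - a) * (x - b) :=
    Real.sq_sqrt (le_of_lt (mul_pos hxa hxb'))
  have hab : (x - a) * (x - b) = x ^ 2 - x + c ^ 2 / 4 := by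
    rw [ha, hb]; nlinarith [hr]
  have hsq' : s ^ 2 = x ^ 2 - x + c ^ 2 / 4 := by rw [hsq, hab]
  have hspos : 0 < s := Real.sqrt_pos.mpr (mul_pos hxa hxb')
  have hN : 0 < x + s + c / 2 := by linarith
  have hD : 0 < 1 - x - s + c / 2 := by
    have hsum : 0 < 1 - x + c / 2 + s := by linarith
    have hprod : (1 - x - s + c / 2) * (1 - x + c / 2 + s) = (1 - x) * (1 + c) := by
      nlinarith [hsq']
    nlinarith [mul_pos hx1' (by linarith : (0:ℝ) < 1 + c)]
  -- key inequality
  have hA : 0 < 2 * x * (1 - x) + c / 2 := by nlinarith [mul_pos hx0 hx1']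
  have hkey0 : (2 * x - 1) * s < 2 * x * (1 - x) + c / 2 := by
    by_contra hcon
    push_neg at hcon
    have hBB := mul_le_mul hcon hcon hA.le (hA.le.trans hcon)
    nlinarith [hsq', mul_pos hx0 hx1', mul_pos (mul_pos hx0 hx1') hc0,
      mul_nonneg (mul_pos hx0 hx1').le (sq_nonneg c)]
  have hkey : (1 - x - s + c / 2) ^ 2 * x < (x + s + c / 2) ^ 2 * (1 - x) := by
    nlinarith [hsq', mul_pos hspos (sub_pos.mpr hkey0)]
  have hfrac : 1 < ((x + s + c / 2) / (1 - x - s + c / 2)) ^ 2 * ((1 - x) / x) := by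
    rw [div_pow, div_mul_div_comm, lt_div_iff₀ (by positivity)]
    nlinarith [hkey]
  refine ⟨?_, hfrac⟩
  have hlog : 0 < Real.log (((x + s + c / 2) / (1 - x - s + c / 2)) ^ 2 * ((1 - x) / x)) :=
    Real.log_pos hfrac
  have hne1 : ((x + s + c / 2) / (1 - x - s + c / 2)) ^ 2 ≠ 0 := by positivity
  have hne2 : (1 - x) / x ≠ 0 := by positivity
  rw [Real.log_mul hne1 hne2, Real.log_pow] at hlog
  have : 0 < (1 / c) * (2 * Real.log ((x + s + c / 2) / (1 - x - s + c / 2)) +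
      Real.log ((1 - x) / x)) := by
    apply mul_pos (by positivity)
    simpa using hlog
  have heq : 2 / c * Real.log ((x + s + c / 2) / (1 - x - s + c / 2)) +
      1 / c * Real.log ((1 - x) / x) =
      1 / c * (2 * Real.log ((x + s + c / 2) / (1 - x - s + c / 2)) +
        Real.log ((1 - x) / x)) := by ring
  rw [heq]; exact this
end

section
/- For every x ∈ (0,a), the function φ̃(x) = ∫_a^x [ (2/c) log( (s − √((a−s)(b−s)) + c/2)/(1 − s + √((a−s)(b−s)) + c/2) ) + (1/c) log((1−s)/s) ] ds·(−1) is strictly negative; equivalently the derivative φ̃'(x) = −(2/c) log( (x − √((a−x)(b−x)) + c/2)/(1 − x + √((a−x)(b−x)) + c/2) ) − (1/c) log((1−x)/x) is strictly positive on (0,a). -/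
set_option maxHeartbeats 1600000


/-- For every `x ∈ (0,a)`,
`φ̃(x) = -∫_a^x [(2/c) log((s - √((a-s)(b-s)) + c/2)/(1 - s + √((a-s)(b-s)) + c/2))
                + (1/c) log((1-s)/s)] ds < 0`,
and equivalently the derivative
`φ̃'(x) = -(2/c) log((x - √((a-x)(b-x)) + c/2)/(1 - x + √((a-x)(b-x)) + c/2))
          - (1/c) log((1-x)/x)` is strictly positive on `(0,a)`. -/
theorem stmt10 (c a b : ℝ) (hc : c ∈ Set.Ioo (0 : ℝ) 1)
    (ha : a = 1 / 2 - Real.sqrt (1 - c ^ 2) / 2)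
    (hb : b = 1 / 2 + Real.sqrt (1 - c ^ 2) / 2) :
    ∀ x ∈ Set.Ioo 0 a,
      (-(∫ s in a..x,
          ((2 / c) * Real.log ((s - Real.sqrt ((a - s) * (b - s)) + c / 2) /
              (1 - s + Real.sqrt ((a - s) * (b - s)) + c / 2)) +
            (1 / c) * Real.log ((1 - s) / s))) < 0) ∧
      0 < -(2 / c) * Real.log ((x - Real.sqrt ((a - x) * (b - x)) + c / 2) /
            (1 - x + Real.sqrt ((a - x) * (b - x)) + c / 2)) -
          (1 / c) * Real.log ((1 - x) / x) := by
  obtain ⟨hc0, hc1⟩ := hc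
  have h1c : (0:ℝ) < 1 - c ^ 2 := by nlinarith
  have hs2 : Real.sqrt (1 - c ^ 2) ^ 2 = 1 - c ^ 2 := Real.sq_sqrt h1c.le
  have hspos : 0 < Real.sqrt (1 - c ^ 2) := Real.sqrt_pos.mpr h1c
  have hsl1 : Real.sqrt (1 - c ^ 2) < 1 := by
    nlinarith [Real.sqrt_nonneg (1 - c ^ 2)]
  have ha0 : 0 < a := by rw [ha]; linarith
  have hahalf : a < 1 / 2 := by rw [ha]; linarith
  have hba : a < b := by rw [ha, hb]; linarith
  have hab1 : a + b = 1 := by rw [ha, hb]; ring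
  have hab2 : a * b = c ^ 2 / 4 := by rw [ha, hb]; nlinarith
  -- pointwise key inequality
  have key : ∀ x ∈ Set.Ioo (0:ℝ) a,
      0 < -(2 / c) * Real.log ((x - Real.sqrt ((a - x) * (b - x)) + c / 2) /
            (1 - x + Real.sqrt ((a - x) * (b - x)) + c / 2)) -
          (1 / c) * Real.log ((1 - x) / x) := by
    rintro x ⟨hx0, hxa⟩
    have hx1 : x < 1 := by linarith
    set r := Real.sqrt ((a - x) * (b - x)) with hrdef
    have hprod : 0 < (a - x) * (b - x) := mul_pos (by linarith) (by linarith)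
    have hr0 : 0 < r := Real.sqrt_pos.mpr hprod
    have hr2 : r ^ 2 = x ^ 2 - x + c ^ 2 / 4 := by
      rw [hrdef, Real.sq_sqrt hprod.le]; nlinarith
    have hrlt : r < x + c / 2 := by
      have h1 : r ^ 2 < (x + c / 2) ^ 2 := by nlinarith
      exact lt_of_pow_lt_pow_left₀ 2 (by positivity) h1
    have hkey : r * (1 - 2 * x) < 2 * x * (1 - x) + c / 2 := by
      have h1 : (r * (1 - 2 * x)) ^ 2 < (2 * x * (1 - x) + c / 2) ^ 2 := by
        have hsq : (2 * x * (1 - x) + c / 2) ^ 2 - (r * (1 - 2 * x)) ^ 2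
            = x * (1 - x) * (1 + c) ^ 2 := by linear_combination (-(1 - 2 * x) ^ 2) * hr2
        nlinarith [mul_pos (mul_pos hx0 (by linarith : (0:ℝ) < 1 - x))
          (by positivity : (0:ℝ) < (1 + c) ^ 2)]
      exact lt_of_pow_lt_pow_left₀ 2 (by nlinarith) h1
    have hN : 0 < x - r + c / 2 := by linarith
    have hD : 0 < 1 - x + r + c / 2 := by linarith
    have hident : (x - r + c / 2) ^ 2 * (1 - x) - (1 - x + r + c / 2) ^ 2 * x
        = -(2 * (r * (2 * x * (1 - x) + c / 2 - r * (1 - 2 * x)))) := by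
      linear_combination (2 * x - 1) * hr2
    have hineq : (x - r + c / 2) ^ 2 * (1 - x) < (1 - x + r + c / 2) ^ 2 * x := by
      have hm : 0 < r * (2 * x * (1 - x) + c / 2 - r * (1 - 2 * x)) :=
        mul_pos hr0 (by linarith)
      linarith [hident, hm]
    have hlog : Real.log ((x - r + c / 2) ^ 2 * (1 - x))
        < Real.log ((1 - x + r + c / 2) ^ 2 * x) :=
      Real.log_lt_log (mul_pos (pow_pos hN 2) (by linarith)) hineq
    rw [Real.log_mul (by positivity) (by linarith), Real.log_mul (by positivity) hx0.ne',
        Real.log_pow, Real.log_pow] at hlog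
    rw [Real.log_div hN.ne' hD.ne', Real.log_div (by linarith : (1:ℝ) - x ≠ 0) hx0.ne']
    have heq : -(2 / c) * (Real.log (x - r + c / 2) - Real.log (1 - x + r + c / 2)) -
        (1 / c) * (Real.log (1 - x) - Real.log x)
        = (2 * Real.log (1 - x + r + c / 2) + Real.log x
            - (2 * Real.log (x - r + c / 2) + Real.log (1 - x))) / c := by ring
    rw [heq]
    apply div_pos _ hc0
    push_cast at hlog
    linarith
  intro x hx
  obtain ⟨hx0, hxa⟩ := hx
  refine ⟨?_, key x ⟨hx0, hxa⟩⟩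
  -- positivity facts on [x, a]
  have hNpos : ∀ s ∈ Set.Icc x a, 0 < s - Real.sqrt ((a - s) * (b - s)) + c / 2 := by
    intro s hs
    have hs0 : 0 < s := lt_of_lt_of_le hx0 hs.1
    have hprod : 0 ≤ (a - s) * (b - s) :=
      mul_nonneg (by linarith [hs.2]) (by linarith [hs.2])
    have hr2 : Real.sqrt ((a - s) * (b - s)) ^ 2 = s ^ 2 - s + c ^ 2 / 4 := by
      rw [Real.sq_sqrt hprod]; nlinarith
    nlinarith [Real.sqrt_nonneg ((a - s) * (b - s))]
  have hDpos : ∀ s ∈ Set.Icc x a, 0 < 1 - s + Real.sqrt ((a - s) * (b - s)) + c / 2 := by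
    intro s hs
    have := Real.sqrt_nonneg ((a - s) * (b - s))
    have := hs.2
    linarith
  have hcont : ContinuousOn (fun s : ℝ =>
      -((2 / c) * Real.log ((s - Real.sqrt ((a - s) * (b - s)) + c / 2) /
          (1 - s + Real.sqrt ((a - s) * (b - s)) + c / 2)) +
        (1 / c) * Real.log ((1 - s) / s))) (Set.Icc x a) := by
    have hsq : ContinuousOn (fun s : ℝ => Real.sqrt ((a - s) * (b - s))) (Set.Icc x a) :=
      (Real.continuous_sqrt.comp (by continuity)).continuousOn
    apply ContinuousOn.neg
    apply ContinuousOn.add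
    · apply continuousOn_const.mul
      apply ContinuousOn.log
      · exact ((continuousOn_id.sub hsq).add continuousOn_const).div
          (((continuousOn_const.sub continuousOn_id).add hsq).add continuousOn_const)
          (fun s hs => (hDpos s hs).ne')
      · intro s hs
        exact (div_pos (hNpos s hs) (hDpos s hs)).ne'
    · apply continuousOn_const.mul
      apply ContinuousOn.log
      · exact (continuousOn_const.sub continuousOn_id).div continuousOn_id
          (fun s hs => (lt_of_lt_of_le hx0 hs.1).ne')
      · intro s hs
        have hs0 : 0 < s := lt_of_lt_of_le hx0 hs.1
        have hs1 : s < 1 := by have := hs.2; linarith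
        exact (div_pos (by linarith) hs0).ne'
  have hinteg : IntervalIntegrable (fun s : ℝ =>
      -((2 / c) * Real.log ((s - Real.sqrt ((a - s) * (b - s)) + c / 2) /
          (1 - s + Real.sqrt ((a - s) * (b - s)) + c / 2)) +
        (1 / c) * Real.log ((1 - s) / s))) MeasureTheory.volume x a := by
    apply ContinuousOn.intervalIntegrable
    rwa [Set.uIcc_of_le hxa.le]
  have hpos : 0 < ∫ s in x..a,
      -((2 / c) * Real.log ((s - Real.sqrt ((a - s) * (b - s)) + c / 2) /
          (1 - s + Real.sqrt ((a - s) * (b - s)) + c / 2)) +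
        (1 / c) * Real.log ((1 - s) / s)) := by
    apply intervalIntegral.intervalIntegral_pos_of_pos_on hinteg _ hxa
    intro s hs
    have := key s ⟨lt_trans hx0 hs.1, hs.2⟩
    linarith
  rw [intervalIntegral.integral_neg] at hpos
  rw [intervalIntegral.integral_symm x a]
  linarith
end
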